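/- arXiv:math/0610623 — 2 statements merged into one kernel-verified Lean document; each statement's English description precedes it below -/
import Mathlib

section
/- For every u* ∈ ∂C(0), every v ∈ SSAT({u*},(0,+∞)) and every λ > 0, the point u* + λ(v − u*) belongs to SSAT({u*},(0,+∞)). -/
open MeasureTheory Filter Set
open scoped Classical

noncomputable section

/-- The ambient space `ℝ^N` with the Euclidean structure. -/
abbrev Euc (N : ℕ) := EuclideanSpace ℝ (Fin N)

variable {N : ℕ}

/-- The cell `C((k_i))` : points whose coordinates in the basis `ψ` satisfy
`τ(k_i - 1/2) ≤ u_i ≤ τ(k_i + 1/2)`. -/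
def cube (ψ : Module.Basis (Fin N) ℝ (Euc N)) (τ : ℝ) (k : Fin N → ℤ) : Set (Euc N) :=
  {u | ∀ i, τ * ((k i : ℝ) - 1/2) ≤ ψ.repr u i ∧ ψ.repr u i ≤ τ * ((k i : ℝ) + 1/2)}

/-- The central cell `C(0)`. -/
def cube0 (ψ : Module.Basis (Fin N) ℝ (Euc N)) (τ : ℝ) : Set (Euc N) := cube ψ τ 0

/-- The set of active (saturated) coordinates `J(u)` for `u ∈ C(0)`. -/
def Jset (ψ : Module.Basis (Fin N) ℝ (Euc N)) (τ : ℝ) (u : Euc N) : Set (Fin N) :=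
  {i | ψ.repr u i = τ / 2 ∨ ψ.repr u i = -(τ / 2)}

/-- `sol` is the solution map of the problems `(P)(u)` : `sol u` minimizes `f(v - u)` over
`C(0)`.  (Under the hypotheses on `f` the minimizer is unique.) -/
def IsSol (ψ : Module.Basis (Fin N) ℝ (Euc N)) (τ : ℝ) (f : Euc N → ℝ) (sol : Euc N → Euc N) : Prop :=
  ∀ u, sol u ∈ cube0 ψ τ ∧ IsMinOn (fun v => f (v - u)) (cube0 ψ τ) (sol u)

/-- `SSAT(C, A)` : the set of data `u` whose solution `sol u` lies in `C` and with
`f_d(u - sol u) ∈ A`. -/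
def SSAT (sol : Euc N → Euc N) (fd : Euc N → ℝ) (C : Set (Euc N)) (A : Set ℝ) : Set (Euc N) :=
  {u | sol u ∈ C ∧ fd (u - sol u) ∈ A}

/-- `f` is a norm. -/
structure IsNormLike (f : Euc N → ℝ) : Prop where
  add_le : ∀ x y, f (x + y) ≤ f x + f y
  smul_eq : ∀ (c : ℝ) (x), f (c • x) = |c| * f x
  eq_zero_iff : ∀ x, f x = 0 ↔ x = 0

/-- `f` is a norm, continuously differentiable away from `0`, with strictly convex
level sets. -/
structure GoodNorm (f : Euc N → ℝ) : Prop where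
  add_le : ∀ x y, f (x + y) ≤ f x + f y
  smul_eq : ∀ (c : ℝ) (x), f (c • x) = |c| * f x
  eq_zero_iff : ∀ x, f x = 0 ↔ x = 0
  smooth : ∀ x : Euc N, x ≠ 0 → ContDiffAt ℝ 1 f x
  sconv : StrictConvex ℝ {x : Euc N | f x ≤ 1}

/-- `f` is curved : the normalized-gradient map `h : {f = 1} → S^{N-1}`,
`h(u) = ∇f(u)/‖∇f(u)‖₂`, is a bijection whose inverse is Lipschitz. -/
def Curved (f : Euc N → ℝ) : Prop :=
  ∃ (L : NNReal) (g : Euc N → Euc N),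
    LipschitzOnWith L g (Metric.sphere (0 : Euc N) 1) ∧
    (∀ u : Euc N, f u = 1 → g (‖gradient f u‖⁻¹ • gradient f u) = u) ∧
    ∀ w ∈ Metric.sphere (0 : Euc N) 1, ∃ u, f u = 1 ∧ ‖gradient f u‖⁻¹ • gradient f u = w

/-- The projection `p` onto `Span(ψ_j : j ∈ J)` along the other basis vectors. -/
def pJ (ψ : Module.Basis (Fin N) ℝ (Euc N)) (J : Set (Fin N)) (x : Euc N) : Euc N :=
  ∑ j : Fin N, if j ∈ J then ψ.repr x j • ψ j else 0

/-- The "center" `u^c` of the face of `u` : keep the saturated coordinates, zero out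
the others. -/
def ucOf (ψ : Module.Basis (Fin N) ℝ (Euc N)) (τ : ℝ) (u : Euc N) : Euc N :=
  pJ ψ (Jset ψ τ u) u

/-- The equivalence class `ū` of `u` in `C(0)` : same active set. -/
def ubar (ψ : Module.Basis (Fin N) ℝ (Euc N)) (τ : ℝ) (u : Euc N) : Set (Euc N) :=
  {w ∈ cube0 ψ τ | Jset ψ τ w = Jset ψ τ u}

/-- The discrete grid `D = τ ℤ^N` (in the basis `ψ`). -/
def Dgrid (ψ : Module.Basis (Fin N) ℝ (Euc N)) (τ : ℝ) : Set (Euc N) :=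
  {x | ∃ k : Fin N → ℤ, x = ∑ i, (τ * (k i : ℝ)) • ψ i}

/-- The slice `Dom((k_j)_{j∈J})` of the grid : grid points whose `J`-coordinates are
the prescribed `τ k_j`. -/
def DomSlice (ψ : Module.Basis (Fin N) ℝ (Euc N)) (τ : ℝ) (J : Set (Fin N)) (k : Fin N → ℤ) :
    Set (Euc N) :=
  {x ∈ Dgrid ψ τ | ∀ j ∈ J, ψ.repr x j = τ * (k j : ℝ)}

/-- The grid `τ ℤ^J` inside `Span(ψ_j : j ∈ J)`. -/
def JgridJ (ψ : Module.Basis (Fin N) ℝ (Euc N)) (τ : ℝ) (J : Set (Fin N)) : Set (Euc N) :=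
  {x | ∃ k : Fin N → ℤ, x = ∑ j : Fin N, if j ∈ J then (τ * (k j : ℝ)) • ψ j else 0}

/-- `Leb_K(S)` : the Lebesgue measure (in `ℝ^{#J}`) of the set of `J`-indexed coordinate
families whose combination lies in `S`. -/
def lebJ (ψ : Module.Basis (Fin N) ℝ (Euc N)) (J : Set (Fin N)) (S : Set (Euc N)) : ENNReal :=
  volume {a : ↥J → ℝ | (∑ j : ↥J, a j • ψ (j : Fin N)) ∈ S}

/-- The set `C_K` of centers of the faces of codimension `K`. -/
def CKset (ψ : Module.Basis (Fin N) ℝ (Euc N)) (τ : ℝ) (K : ℕ) : Set (Euc N) :=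
  {x | ∃ (J : Set (Fin N)) (ε : Fin N → ℝ), J.ncard = K ∧ (∀ j ∈ J, ε j = 1 ∨ ε j = -1) ∧
    x = ∑ j : Fin N, if j ∈ J then (ε j * (τ / 2)) • ψ j else 0}

/-- The set `Cl_K` of boundary points of `C(0)` with exactly `K` active constraints. -/
def ClKset (ψ : Module.Basis (Fin N) ℝ (Euc N)) (τ : ℝ) (K : ℕ) : Set (Euc N) :=
  {u | u ∈ frontier (cube0 ψ τ) ∧ (Jset ψ τ u).ncard = K}

/-- `k_i(u)` : the unique integer with `τ(k_i - 1/2) ≤ u_i < τ(k_i + 1/2)`. -/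
def kfun (ψ : Module.Basis (Fin N) ℝ (Euc N)) (τ : ℝ) (u : Euc N) (i : Fin N) : ℤ :=
  ⌊ψ.repr u i / τ + 1 / 2⌋

/-- The grid point `τ Σ k_i(u) ψ_i` approximating `u`. -/
def gridpt (ψ : Module.Basis (Fin N) ℝ (Euc N)) (τ : ℝ) (u : Euc N) : Euc N :=
  ∑ i, (τ * (kfun ψ τ u i : ℝ)) • ψ i

/-- `J̃(u)` : the active set of the solution of `(P)` at the grid point of `u`. -/
def Jtil (ψ : Module.Basis (Fin N) ℝ (Euc N)) (τ : ℝ) (sol : Euc N → Euc N) (u : Euc N) :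
    Set (Fin N) :=
  Jset ψ τ (sol (gridpt ψ τ u))

lemma aux_f_zero (f : Euc N → ℝ) (h0 : ∀ x, f x = 0 ↔ x = 0) : f 0 = 0 :=
  (h0 0).mpr rfl

lemma aux_f_nonneg (f : Euc N → ℝ) (hadd : ∀ x y, f (x + y) ≤ f x + f y)
    (hs : ∀ (c : ℝ) (x), f (c • x) = |c| * f x) (h0 : ∀ x, f x = 0 ↔ x = 0) :
    ∀ x, 0 ≤ f x := by
  intro x
  have hneg : f (-x) = f x := by
    have := hs (-1) x
    simpa using this
  have h2 := hadd x (-x)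
  rw [add_neg_cancel, aux_f_zero f h0, hneg] at h2
  linarith

lemma cube0_convex (ψ : Module.Basis (Fin N) ℝ (Euc N)) (τ : ℝ) : Convex ℝ (cube0 ψ τ) := by
  intro x hx y hy a b ha hb hab
  intro i
  have hx' := hx i
  have hy' := hy i
  have hrep : ψ.repr (a • x + b • y) i = a * ψ.repr x i + b * ψ.repr y i := by
    simp [map_add, _root_.map_smul]
  simp only [cube0, cube, Set.mem_setOf_eq, Pi.zero_apply, Int.cast_zero] at hx' hy' ⊢
  rw [hrep]
  constructor <;> nlinarith [hx'.1, hx'.2, hy'.1, hy'.2]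

lemma interior_lt_one (f : Euc N → ℝ)
    (hs : ∀ (c : ℝ) (x : Euc N), f (c • x) = |c| * f x) (h0 : ∀ x, f x = 0 ↔ x = 0)
    {z : Euc N} (hz : z ∈ interior {x : Euc N | f x ≤ 1}) : f z < 1 := by
  have hle : f z ≤ 1 := by
    have := (interior_subset hz : z ∈ {x : Euc N | f x ≤ 1})
    exact this
  rcases lt_or_eq_of_le hle with h | h
  · exact h
  · exfalso
    have hz0 : z ≠ 0 := by
      intro hzz
      rw [hzz, aux_f_zero f h0] at h
      norm_num at h
    obtain ⟨ε, hε, hball⟩ := Metric.isOpen_iff.mp isOpen_interior z hz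
    have hzn : 0 < ‖z‖ := norm_pos_iff.mpr hz0
    set t : ℝ := 1 + ε / (2 * ‖z‖) with ht
    have hpos : 0 < ε / (2 * ‖z‖) := by positivity
    have ht1 : 1 < t := by rw [ht]; linarith
    have hmem : t • z ∈ Metric.ball z ε := by
      have h1 : t • z - z = (t - 1) • z := by rw [sub_smul, one_smul]
      rw [Metric.mem_ball, dist_eq_norm, h1, norm_smul, Real.norm_eq_abs,
        abs_of_pos (by linarith : (0:ℝ) < t - 1), ht]
      have h2 : (1 + ε / (2 * ‖z‖) - 1) * ‖z‖ = ε / 2 := by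
        field_simp
        ring
      rw [h2]
      linarith
    have hin : t • z ∈ {x : Euc N | f x ≤ 1} := interior_subset (hball hmem)
    have hft : f (t • z) = t := by
      rw [hs t z, h, abs_of_pos (by linarith : (0:ℝ) < t), mul_one]
    simp only [Set.mem_setOf_eq, hft] at hin
    linarith

/-- `SSAT({u*},(0,∞))` is stable under the dilations centered at `u*`. -/
theorem stmt2 {N : ℕ} (hN : 1 ≤ N) (ψ : Module.Basis (Fin N) ℝ (Euc N)) (τ : ℝ) (hτ : 0 < τ)
    (f : Euc N → ℝ) (hf : GoodNorm f) (fd : Euc N → ℝ) (hfd : IsNormLike fd)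
    (sol : Euc N → Euc N) (hsol : IsSol ψ τ f sol)
    (us : Euc N) (hus : us ∈ frontier (cube0 ψ τ))
    (v : Euc N) (hv : v ∈ SSAT sol fd {us} (Set.Ioi (0 : ℝ)))
    (lam : ℝ) (hlam : 0 < lam) :
    us + lam • (v - us) ∈ SSAT sol fd {us} (Set.Ioi (0 : ℝ)) := by
  obtain ⟨hsolv, hfdv⟩ := hv
  simp only [Set.mem_singleton_iff] at hsolv
  rw [hsolv] at hfdv
  have hfdv' : 0 < fd (v - us) := hfdv
  have hvne : v - us ≠ 0 := by
    intro h
    rw [h, aux_f_zero fd hfd.eq_zero_iff] at hfdv'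
    exact lt_irrefl 0 hfdv'
  set w : Euc N := us + lam • (v - us) with hw
  have f_nonneg := aux_f_nonneg f hf.add_le hf.smul_eq hf.eq_zero_iff
  have hfuv : 0 < f (us - v) := by
    rcases lt_or_eq_of_le (f_nonneg (us - v)) with h | h
    · exact h
    · exfalso
      have : us - v = 0 := (hf.eq_zero_iff _).mp h.symm
      apply hvne
      have : v - us = -(us - v) := by abel
      rw [this, ‹us - v = 0›, neg_zero]
  -- us ∈ cube0 and minimizes f(· - v)
  have husC : us ∈ cube0 ψ τ := by rw [← hsolv]; exact (hsol v).1
  have hminv : IsMinOn (fun x => f (x - v)) (cube0 ψ τ) us := by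
    rw [← hsolv]; exact (hsol v).2
  -- key identities
  have hwus : us - w = lam • (us - v) := by
    rw [hw]; module
  have hfusw : f (us - w) = lam * f (us - v) := by
    rw [hwus, hf.smul_eq, abs_of_pos hlam]
  -- us minimizes f(· - w) on cube0
  have hminw : ∀ x ∈ cube0 ψ τ, f (us - w) ≤ f (x - w) := by
    intro x hx
    rcases le_or_gt lam 1 with hle | hgt
    · -- triangle inequality case
      have hwv : w - v = (1 - lam) • (us - v) := by
        rw [hw]; module
      have hfwv : f (w - v) = (1 - lam) * f (us - v) := by
        rw [hwv, hf.smul_eq, abs_of_nonneg (by linarith)]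
      have htri : f (x - v) ≤ f (x - w) + f (w - v) := by
        have := hf.add_le (x - w) (w - v)
        have hxv : x - w + (w - v) = x - v := by abel
        rwa [hxv] at this
      have hmin := hminv hx
      simp only [Set.mem_setOf_eq] at hmin
      rw [hfusw]
      have : f (us - v) ≤ f (x - v) := hmin
      nlinarith [f_nonneg (x - w)]
    · -- rescaling case
      have hlam1 : (0:ℝ) < lam⁻¹ := by positivity
      have hlaminv_le : lam⁻¹ ≤ 1 := by
        rw [inv_le_one_iff₀]; right; linarith
      set x' : Euc N := lam⁻¹ • x + (1 - lam⁻¹) • us with hx'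
      have hx'C : x' ∈ cube0 ψ τ :=
        cube0_convex ψ τ hx husC (le_of_lt hlam1) (by linarith) (by ring)
      have hkey : x' - v = lam⁻¹ • (x - w) := by
        rw [hx', hw]
        have hl : lam⁻¹ * lam = 1 := inv_mul_cancel₀ (ne_of_gt hlam)
        match_scalars <;> field_simp <;> ring
      have h1 : f (x' - v) = lam⁻¹ * f (x - w) := by
        rw [hkey, hf.smul_eq, abs_of_pos hlam1]
      have hmin := hminv hx'C
      simp only [Set.mem_setOf_eq] at hmin
      have : f (us - v) ≤ lam⁻¹ * f (x - w) := by rw [← h1]; exact hmin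
      rw [hfusw]
      calc lam * f (us - v) ≤ lam * (lam⁻¹ * f (x - w)) := by
            apply mul_le_mul_of_nonneg_left this (le_of_lt hlam)
        _ = f (x - w) := by field_simp
  -- sol w is also a minimizer; equal values
  have hsolwC : sol w ∈ cube0 ψ τ := (hsol w).1
  have hminsolw : IsMinOn (fun x => f (x - w)) (cube0 ψ τ) (sol w) := (hsol w).2
  have heq : f (sol w - w) = f (us - w) := by
    apply le_antisymm
    · have := hminsolw husC; simpa using this
    · exact hminw (sol w) hsolwC
  -- uniqueness via strict convexity
  have hm : 0 < f (us - w) := by rw [hfusw]; positivity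
  have hsolw_eq : sol w = us := by
    by_contra hne
    have hminv0 : (0:ℝ) < (f (us - w))⁻¹ := by positivity
    have hfa : f ((f (us - w))⁻¹ • (sol w - w)) = 1 := by
      rw [hf.smul_eq, abs_of_pos hminv0, heq]
      field_simp
    have hfb : f ((f (us - w))⁻¹ • (us - w)) = 1 := by
      rw [hf.smul_eq, abs_of_pos hminv0]
      field_simp
    have hab : (f (us - w))⁻¹ • (sol w - w) ≠ (f (us - w))⁻¹ • (us - w) := by
      intro h
      have h2 := smul_right_injective (Euc N) (ne_of_gt hminv0) h
      exact hne (sub_left_injective h2)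
    have hmemA : (f (us - w))⁻¹ • (sol w - w) ∈ {x : Euc N | f x ≤ 1} := by
      simp [hfa]
    have hmemB : (f (us - w))⁻¹ • (us - w) ∈ {x : Euc N | f x ≤ 1} := by
      simp [hfb]
    set z : Euc N := (1/2 : ℝ) • ((f (us - w))⁻¹ • (sol w - w)) +
      (1/2 : ℝ) • ((f (us - w))⁻¹ • (us - w)) with hzdef
    have hseg : z ∈ interior {x : Euc N | f x ≤ 1} :=
      hf.sconv hmemA hmemB hab (by norm_num : (0:ℝ) < 1/2)
        (by norm_num : (0:ℝ) < 1/2) (by norm_num)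
    have hmidlt : f z < 1 :=
      interior_lt_one f hf.smul_eq hf.eq_zero_iff hseg
    set p : Euc N := (1/2 : ℝ) • sol w + (1/2 : ℝ) • us with hp
    have hpC : p ∈ cube0 ψ τ :=
      cube0_convex ψ τ hsolwC husC (by norm_num) (by norm_num) (by norm_num)
    have hpw : p - w = (f (us - w)) • z := by
      rw [hp, hzdef]
      have hl : f (us - w) * (f (us - w))⁻¹ = 1 := mul_inv_cancel₀ (ne_of_gt hm)
      match_scalars <;> field_simp <;> ring
    have hfp : f (p - w) < f (us - w) := by
      rw [hpw, hf.smul_eq, abs_of_pos hm]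
      calc f (us - w) * f z < f (us - w) * 1 := mul_lt_mul_of_pos_left hmidlt hm
        _ = f (us - w) := mul_one _
    have hcontra := hminsolw hpC
    simp only [Set.mem_setOf_eq] at hcontra
    rw [heq] at hcontra
    linarith
  refine ⟨by simp [hsolw_eq], ?_⟩
  have : w - sol w = lam • (v - us) := by
    rw [hsolw_eq, hw]; module
  rw [this, hfd.smul_eq, abs_of_pos hlam]
  exact mul_pos hlam hfdv'
end
end

section
/- Let τ' > 0, u* ∈ ∂C(0) and (k_j)_{j∈J(u*)} ∈ ℤ^{J(u*)}. Then the set SSAT(ū*, (0, τ']) ∩ Dom((k_j)_{j∈J(u*)}) contains at most one point, where Dom((k_j)_{j∈J(u*)}) = { τ Σ_{j∈J(u*)} k_j ψ_j + τ Σ_{i∉J(u*)} k_i ψ_i : (k_i)_{i∉J(u*)} ∈ ℤ^{I∖J(u*)} } and ū* = {w ∈ C(0) : J(w) = J(u*)}. -/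
open MeasureTheory Filter Set
open scoped Classical

noncomputable section

variable {N : ℕ}

section AuxStmt7

open Topology

private lemma slope_nonneg' {g : ℝ → ℝ} {c : ℝ} (hg : HasDerivAt g c 0)
    (h : ∀ᶠ t in 𝓝[>] (0:ℝ), g 0 ≤ g t) : 0 ≤ c := by
  have h1 : Tendsto (slope g 0) (𝓝[≠] (0:ℝ)) (𝓝 c) := hasDerivAt_iff_tendsto_slope.mp hg
  have h2 : Tendsto (slope g 0) (𝓝[>] (0:ℝ)) (𝓝 c) :=
    h1.mono_left (nhdsWithin_mono _ fun x hx => ne_of_gt hx)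
  refine ge_of_tendsto h2 ?_
  filter_upwards [h, self_mem_nhdsWithin] with t ht ht'
  have ht0 : (0:ℝ) < t := ht'
  rw [slope_def_field]
  apply div_nonneg (by linarith) (by linarith)

private lemma slope_le' {g : ℝ → ℝ} {c M : ℝ} (hg : HasDerivAt g c 0)
    (h : ∀ᶠ t in 𝓝[>] (0:ℝ), g t - g 0 ≤ t * M) : c ≤ M := by
  have h1 : Tendsto (slope g 0) (𝓝[≠] (0:ℝ)) (𝓝 c) := hasDerivAt_iff_tendsto_slope.mp hg
  have h2 : Tendsto (slope g 0) (𝓝[>] (0:ℝ)) (𝓝 c) :=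
    h1.mono_left (nhdsWithin_mono _ fun x hx => ne_of_gt hx)
  refine le_of_tendsto h2 ?_
  filter_upwards [h, self_mem_nhdsWithin] with t ht ht'
  have ht0 : (0:ℝ) < t := ht'
  rw [slope_def_field, div_le_iff₀ (by linarith)]
  linarith

private lemma hasDerivAt_line (f : Euc N → ℝ) {φ : Euc N →L[ℝ] ℝ} {w : Euc N}
    (hdf : HasFDerivAt f φ w) (e : Euc N) :
    HasDerivAt (fun t : ℝ => f (w + t • e)) (φ e) 0 := by
  have h1 : HasDerivAt (fun t : ℝ => w + t • e) e 0 := by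
    simpa using ((hasDerivAt_id (0:ℝ)).smul_const e).const_add w
  have h0 : (fun t : ℝ => w + t • e) 0 = w := by simp
  have hdf' : HasFDerivAt f φ ((fun t : ℝ => w + t • e) 0) := by rw [h0]; exact hdf
  exact hdf'.comp_hasDerivAt 0 h1

private lemma convexOn_of_normlike {f : Euc N → ℝ} (hadd : ∀ x y, f (x+y) ≤ f x + f y)
    (hsmul : ∀ c x, f (c • x) = |c| * f x) : ConvexOn ℝ Set.univ f := by
  refine ⟨convex_univ, fun x _ y _ a b ha hb hab => ?_⟩
  calc f (a • x + b • y) ≤ f (a • x) + f (b • y) := hadd _ _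
    _ = a * f x + b * f y := by rw [hsmul, hsmul, abs_of_nonneg ha, abs_of_nonneg hb]
    _ = a • f x + b • f y := by simp [smul_eq_mul]

private lemma subgrad {f : Euc N → ℝ} (hconv : ConvexOn ℝ Set.univ f)
    {φ : Euc N →L[ℝ] ℝ} {w : Euc N} (hdf : HasFDerivAt f φ w) (z : Euc N) :
    φ z - φ w ≤ f z - f w := by
  have hline := hasDerivAt_line f hdf (z - w)
  have key : φ (z - w) ≤ f z - f w := by
    apply slope_le' hline
    filter_upwards [Ioo_mem_nhdsGT_of_mem (Set.left_mem_Ico.2 one_pos)] with t ht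
    have hx : w + t • (z - w) = (1 - t) • w + t • z := by module
    have hcv := hconv.2 (Set.mem_univ w) (Set.mem_univ z)
      (by linarith [ht.2] : (0:ℝ) ≤ 1 - t) (le_of_lt ht.1) (by ring)
    simp only [smul_eq_mul] at hcv
    simp only [hx, zero_smul, add_zero]
    linarith
  simpa [map_sub] using key

private lemma euler_id {f : Euc N → ℝ} (hsmul : ∀ c x, f (c • x) = |c| * f x)
    {φ : Euc N →L[ℝ] ℝ} {w : Euc N} (hdf : HasFDerivAt f φ w) : φ w = f w := by
  have h1 : HasDerivAt (fun t : ℝ => f (w + t • w)) (φ w) 0 := hasDerivAt_line f hdf w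
  have h2 : HasDerivAt (fun t : ℝ => (1 + t) * f w) (f w) 0 := by
    simpa using ((hasDerivAt_id (0:ℝ)).const_add 1).mul_const (f w)
  have heq : (fun t : ℝ => (1 + t) * f w) =ᶠ[𝓝 (0:ℝ)] (fun t : ℝ => f (w + t • w)) := by
    filter_upwards [eventually_gt_nhds (by norm_num : (-1:ℝ) < 0)] with t ht
    have hx : w + t • w = (1 + t) • w := by module
    rw [hx, hsmul, abs_of_pos (by linarith)]
  have h3 : HasDerivAt (fun t : ℝ => f (w + t • w)) (f w) 0 := h2.congr_of_eventuallyEq heq.symm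
  exact h1.unique h3

private lemma strict_ray {f : Euc N → ℝ} (hsmul : ∀ c x, f (c • x) = |c| * f x)
    (hsc : StrictConvex ℝ {x : Euc N | f x ≤ 1})
    {φ : Euc N →L[ℝ] ℝ} (hφle : ∀ z, φ z ≤ f z)
    {w w' : Euc N} (hfw : 0 < f w) (hfw' : 0 < f w')
    (h1 : φ w = f w) (h2 : φ w' = f w') :
    w' = (f w' / f w) • w := by
  have key : ∀ x y : Euc N, f x = 1 → f y = 1 → φ x = 1 → φ y = 1 → x = y := by
    intro x y hfx hfy hφx hφy
    by_contra hxy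
    have hxm : x ∈ {x : Euc N | f x ≤ 1} := by simp [hfx]
    have hym : y ∈ {x : Euc N | f x ≤ 1} := by simp [hfy]
    have hmem := hsc hxm hym hxy (by norm_num : (0:ℝ) < 1/2) (by norm_num : (0:ℝ) < 1/2)
      (by norm_num)
    set m := (1/2:ℝ) • x + (1/2:ℝ) • y with hmdef
    have hφm : φ m = 1 := by
      rw [hmdef, map_add, _root_.map_smul, _root_.map_smul, smul_eq_mul, smul_eq_mul,
        hφx, hφy]
      norm_num
    have hm0 : m ≠ 0 := by
      intro h; rw [h, map_zero] at hφm; norm_num at hφm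
    obtain ⟨δ, hδ, hball⟩ := Metric.isOpen_iff.mp isOpen_interior m hmem
    set s := 1 + δ / (2 * ‖m‖) with hsdef
    have hnm : 0 < ‖m‖ := norm_pos_iff.2 hm0
    have hs1 : 1 < s := by
      rw [hsdef]; nlinarith [div_pos hδ (by positivity : (0:ℝ) < 2 * ‖m‖)]
    have hmem2 : s • m ∈ Metric.ball m δ := by
      rw [Metric.mem_ball, dist_eq_norm]
      have h' : s • m - m = (s - 1) • m := by module
      rw [h', norm_smul, Real.norm_eq_abs, abs_of_pos (by linarith)]
      rw [hsdef]
      have h'' : (1 + δ / (2 * ‖m‖) - 1) * ‖m‖ = δ / 2 := by field_simp; ring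
      rw [h'']; linarith
    have hle : f (s • m) ≤ 1 := by have h' := interior_subset (hball hmem2); simpa using h'
    have heq : φ (s • m) = s := by rw [_root_.map_smul, smul_eq_mul, hφm, mul_one]
    have := hφle (s • m)
    linarith
  have hfx : f ((f w)⁻¹ • w) = 1 := by
    rw [hsmul, abs_of_pos (inv_pos.2 hfw)]; field_simp
  have hfy : f ((f w')⁻¹ • w') = 1 := by
    rw [hsmul, abs_of_pos (inv_pos.2 hfw')]; field_simp
  have hφx : φ ((f w)⁻¹ • w) = 1 := by
    rw [_root_.map_smul, smul_eq_mul, h1]; field_simp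
  have hφy : φ ((f w')⁻¹ • w') = 1 := by
    rw [_root_.map_smul, smul_eq_mul, h2]; field_simp
  have hxy := key _ _ hfx hfy hφx hφy
  have hthis : w' = f w' • ((f w)⁻¹ • w) := by
    rw [hxy, smul_smul, mul_inv_cancel₀ (ne_of_gt hfw'), one_smul]
  rw [div_eq_mul_inv, mul_smul]; exact hthis


private lemma mem_cube0_iff' (ψ : Module.Basis (Fin N) ℝ (Euc N)) (τ : ℝ) (u : Euc N) :
    u ∈ cube0 ψ τ ↔ ∀ i, -(τ/2) ≤ ψ.repr u i ∧ ψ.repr u i ≤ τ/2 := by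
  unfold cube0 cube
  simp only [Set.mem_setOf_eq, Pi.zero_apply, Int.cast_zero]
  constructor <;> intro h i <;> obtain ⟨h1, h2⟩ := h i <;> constructor <;> linarith

private lemma repr_add_smul' (ψ : Module.Basis (Fin N) ℝ (Euc N)) (v : Euc N) (t : ℝ) (i i' : Fin N) :
    ψ.repr (v + t • ψ i) i' = ψ.repr v i' + (if i = i' then t else 0) := by
  rw [map_add, _root_.map_smul, Finsupp.add_apply, Finsupp.smul_apply, Module.Basis.repr_self,
    Finsupp.single_apply, smul_eq_mul]
  split_ifs <;> ring

private lemma dir_deriv_nonneg {ψ : Module.Basis (Fin N) ℝ (Euc N)} {τ : ℝ}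
    {f : Euc N → ℝ} {u v : Euc N}
    (hmin : IsMinOn (fun x => f (x - u)) (cube0 ψ τ) v)
    {φ : Euc N →L[ℝ] ℝ} (hdf : HasFDerivAt f φ (v - u)) {e : Euc N}
    (hev : ∀ᶠ t in 𝓝[>] (0:ℝ), v + t • e ∈ cube0 ψ τ) : 0 ≤ φ e := by
  have hline : HasDerivAt (fun t : ℝ => f (v + t • e - u)) (φ e) 0 := by
    have h := hasDerivAt_line f hdf e
    have heq : (fun t : ℝ => f (v - u + t • e)) = (fun t : ℝ => f (v + t • e - u)) := by
      funext t; congr 1; abel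
    rwa [heq] at h
  apply slope_nonneg' hline
  filter_upwards [hev] with t ht
  have := isMinOn_iff.mp hmin _ ht
  simpa using this

private lemma point_facts {ψ : Module.Basis (Fin N) ℝ (Euc N)} {τ : ℝ} (hτ : 0 < τ)
    {f : Euc N → ℝ} (hf : GoodNorm f) {u v : Euc N}
    (hvC : v ∈ cube0 ψ τ) (hmin : IsMinOn (fun x => f (x - u)) (cube0 ψ τ) v)
    (hw : v - u ≠ 0) :
    ∃ φ : Euc N →L[ℝ] ℝ, HasFDerivAt f φ (v - u) ∧
      (∀ i, i ∉ Jset ψ τ v → φ (ψ i) = 0) ∧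
      (∀ i, ψ.repr v i = τ/2 → φ (ψ i) ≤ 0) ∧
      (∀ i, ψ.repr v i = -(τ/2) → 0 ≤ φ (ψ i)) := by
  have hdiff : DifferentiableAt ℝ f (v - u) := (hf.smooth _ hw).differentiableAt one_ne_zero
  have hdf := hdiff.hasFDerivAt
  have hb := (mem_cube0_iff' ψ τ v).1 hvC
  refine ⟨fderiv ℝ f (v - u), hdf, ?_, ?_, ?_⟩
  · -- stationarity
    intro i hi
    have hne1 : ψ.repr v i ≠ τ/2 := fun h => hi (Or.inl h)
    have hne2 : ψ.repr v i ≠ -(τ/2) := fun h => hi (Or.inr h)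
    have hlt1 : ψ.repr v i < τ/2 := lt_of_le_of_ne (hb i).2 hne1
    have hlt2 : -(τ/2) < ψ.repr v i := lt_of_le_of_ne (hb i).1 (Ne.symm hne2)
    have hpos : 0 ≤ fderiv ℝ f (v - u) (ψ i) := by
      apply dir_deriv_nonneg hmin hdf
      filter_upwards [Ioo_mem_nhdsGT_of_mem
        (Set.left_mem_Ico.2 (by linarith : (0:ℝ) < τ/2 - ψ.repr v i))] with t ht
      rw [mem_cube0_iff']
      intro i'
      rw [repr_add_smul']
      obtain ⟨ht1, ht2⟩ := ht
      split_ifs with h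
      · subst h; constructor <;> linarith
      · simpa using hb i'
    have hneg : 0 ≤ fderiv ℝ f (v - u) (-(ψ i)) := by
      apply dir_deriv_nonneg hmin hdf
      filter_upwards [Ioo_mem_nhdsGT_of_mem
        (Set.left_mem_Ico.2 (by linarith : (0:ℝ) < ψ.repr v i + τ/2))] with t ht
      have hrw : v + t • -ψ i = v + (-t) • ψ i := by module
      rw [hrw, mem_cube0_iff']
      intro i'
      rw [repr_add_smul']
      obtain ⟨ht1, ht2⟩ := ht
      split_ifs with h
      · subst h; constructor <;> linarith
      · simpa using hb i'
    rw [map_neg] at hneg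
    linarith
  · -- top
    intro i hi
    have hneg : 0 ≤ fderiv ℝ f (v - u) (-(ψ i)) := by
      apply dir_deriv_nonneg hmin hdf
      filter_upwards [Ioo_mem_nhdsGT_of_mem (Set.left_mem_Ico.2 hτ)] with t ht
      have hrw : v + t • -ψ i = v + (-t) • ψ i := by module
      rw [hrw, mem_cube0_iff']
      intro i'
      rw [repr_add_smul']
      obtain ⟨ht1, ht2⟩ := ht
      split_ifs with h
      · subst h; rw [hi]; constructor <;> linarith
      · simpa using hb i'
    rw [map_neg] at hneg
    linarith
  · -- bottom
    intro i hi
    apply dir_deriv_nonneg hmin hdf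
    filter_upwards [Ioo_mem_nhdsGT_of_mem (Set.left_mem_Ico.2 hτ)] with t ht
    rw [mem_cube0_iff']
    intro i'
    rw [repr_add_smul']
    obtain ⟨ht1, ht2⟩ := ht
    split_ifs with h
    · subst h; rw [hi]; constructor <;> linarith
    · simpa using hb i'

private lemma apply_eq_sum (ψ : Module.Basis (Fin N) ℝ (Euc N)) (φ : Euc N →L[ℝ] ℝ) (x : Euc N) :
    φ x = ∑ i, ψ.repr x i * φ (ψ i) := by
  conv_lhs => rw [← ψ.sum_repr x]
  rw [map_sum]
  congr 1
  funext i
  rw [_root_.map_smul, smul_eq_mul]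

private lemma repr_grid (ψ : Module.Basis (Fin N) ℝ (Euc N)) (c : Fin N → ℝ) (i : Fin N) :
    ψ.repr (∑ j, c j • ψ j) i = c i := by
  rw [Module.Basis.repr_sum_self]

end AuxStmt7

set_option maxHeartbeats 1000000 in
/-- `SSAT(ū*, (0,τ'])` meets each slice `Dom((k_j)_{j∈J(u*)})` of the grid
in at most one point. -/
theorem stmt7 {N : ℕ} (hN : 1 ≤ N) (ψ : Module.Basis (Fin N) ℝ (Euc N)) (τ : ℝ) (hτ : 0 < τ)
    (f : Euc N → ℝ) (hf : GoodNorm f) (fd : Euc N → ℝ) (hfd : IsNormLike fd)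
    (sol : Euc N → Euc N) (hsol : IsSol ψ τ f sol)
    (τ' : ℝ) (hτ' : 0 < τ')
    (us : Euc N) (hus : us ∈ frontier (cube0 ψ τ)) (k : Fin N → ℤ) :
    (SSAT sol fd (ubar ψ τ us) (Set.Ioc 0 τ') ∩
      DomSlice ψ τ (Jset ψ τ us) k).Subsingleton := by
  intro u hu u' hu'
  obtain ⟨hu1, hu2⟩ := hu
  obtain ⟨hu1', hu2'⟩ := hu'
  obtain ⟨hvU, hfdmem⟩ := hu1
  obtain ⟨hvU', hfdmem'⟩ := hu1'
  obtain ⟨_, hvJ⟩ := hvU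
  obtain ⟨_, hvJ'⟩ := hvU'
  obtain ⟨⟨m, hm⟩, hslice⟩ := hu2
  obtain ⟨⟨m', hm'⟩, hslice'⟩ := hu2'
  obtain ⟨hvC, hmin⟩ := hsol u
  obtain ⟨hvC', hmin'⟩ := hsol u'
  set v := sol u with hv
  set v' := sol u' with hv'
  -- nonzero residuals
  have hfd0 : fd 0 = 0 := (hfd.eq_zero_iff 0).mpr rfl
  have hw : v - u ≠ 0 := by
    intro h
    have h2 : u - v = 0 := by
      have := neg_eq_zero.mpr h; rw [neg_sub] at this; exact this
    rw [h2, hfd0] at hfdmem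
    exact absurd hfdmem.1 (lt_irrefl 0)
  have hw' : v' - u' ≠ 0 := by
    intro h
    have h2 : u' - v' = 0 := by
      have := neg_eq_zero.mpr h; rw [neg_sub] at this; exact this
    rw [h2, hfd0] at hfdmem'
    exact absurd hfdmem'.1 (lt_irrefl 0)
  -- basic facts about f
  have hf0 : f 0 = 0 := (hf.eq_zero_iff 0).mpr rfl
  have hfnn : ∀ x, 0 ≤ f x := by
    intro x
    have h1 : f (-x) = f x := by
      have := hf.smul_eq (-1) x; simpa using this
    have h2 := hf.add_le x (-x)
    rw [add_neg_cancel, hf0, h1] at h2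
    linarith
  have hconv := convexOn_of_normlike hf.add_le hf.smul_eq
  have hfw : 0 < f (v - u) :=
    lt_of_le_of_ne (hfnn _) (fun h => hw ((hf.eq_zero_iff _).mp h.symm))
  have hfw' : 0 < f (v' - u') :=
    lt_of_le_of_ne (hfnn _) (fun h => hw' ((hf.eq_zero_iff _).mp h.symm))
  -- optimality derivatives
  obtain ⟨φ, hdf, hstat, htop, hbot⟩ := point_facts hτ hf hvC hmin hw
  obtain ⟨φ', hdf', hstat', htop', hbot'⟩ := point_facts hτ hf hvC' hmin' hw'
  have heul : φ (v - u) = f (v - u) := euler_id hf.smul_eq hdf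
  have heul' : φ' (v' - u') = f (v' - u') := euler_id hf.smul_eq hdf'
  have hφle : ∀ z, φ z ≤ f z := by
    intro z; have := subgrad hconv hdf z; linarith
  have hφ'le : ∀ z, φ' z ≤ f z := by
    intro z; have := subgrad hconv hdf' z; linarith
  -- the pairing
  set x := (v - u) - (v' - u') with hx
  have hA1 : φ x - φ' x = ∑ i, ψ.repr x i * (φ (ψ i) - φ' (ψ i)) := by
    rw [apply_eq_sum ψ φ x, apply_eq_sum ψ φ' x, ← Finset.sum_sub_distrib]
    congr 1; funext i; ring
  have hxiJ : ∀ i ∈ Jset ψ τ us, ψ.repr x i = ψ.repr v i - ψ.repr v' i := by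
    intro i hiJ
    have h1 : ψ.repr u i = τ * (k i : ℝ) := hslice i hiJ
    have h2 : ψ.repr u' i = τ * (k i : ℝ) := hslice' i hiJ
    simp only [hx, map_sub, Finsupp.coe_sub, Pi.sub_apply]
    rw [h1, h2]; ring
  have hterm : ∀ i, ψ.repr x i * (φ (ψ i) - φ' (ψ i)) ≤ 0 := by
    intro i
    by_cases hiJ : i ∈ Jset ψ τ us
    · have hiv : i ∈ Jset ψ τ v := by rw [hvJ]; exact hiJ
      have hiv' : i ∈ Jset ψ τ v' := by rw [hvJ']; exact hiJ
      have hxi := hxiJ i hiJ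
      rcases hiv with h1 | h1 <;> rcases hiv' with h2 | h2
      · have hz : ψ.repr x i = 0 := by rw [hxi, h1, h2]; ring
        rw [hz]; simp
      · have hz : ψ.repr x i = τ := by rw [hxi, h1, h2]; ring
        have ha := htop i h1
        have hb := hbot' i h2
        rw [hz]; nlinarith
      · have hz : ψ.repr x i = -τ := by rw [hxi, h1, h2]; ring
        have ha := hbot i h1
        have hb := htop' i h2
        rw [hz]; nlinarith
      · have hz : ψ.repr x i = 0 := by rw [hxi, h1, h2]; ring
        rw [hz]; simp
    · have hiv : i ∉ Jset ψ τ v := by rw [hvJ]; exact hiJ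
      have hiv' : i ∉ Jset ψ τ v' := by rw [hvJ']; exact hiJ
      rw [hstat i hiv, hstat' i hiv']; simp
  have hAle : φ x - φ' x ≤ 0 := by
    rw [hA1]; exact Finset.sum_nonpos (fun i _ => hterm i)
  have hφx : φ x = φ (v - u) - φ (v' - u') := by rw [hx]; exact map_sub φ _ _
  have hφ'x : φ' x = φ' (v - u) - φ' (v' - u') := by rw [hx]; exact map_sub φ' _ _
  have hA2 : φ x - φ' x =
      (f (v' - u') - φ (v' - u')) + (f (v - u) - φ' (v - u)) := by
    rw [hφx, hφ'x, heul, heul']; ring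
  have hs1 : 0 ≤ f (v' - u') - φ (v' - u') := by linarith [hφle (v' - u')]
  have hs2 : 0 ≤ f (v - u) - φ' (v - u) := by linarith [hφ'le (v - u)]
  have hA0 : φ x - φ' x = 0 := le_antisymm hAle (by rw [hA2]; linarith)
  have htermz : ∀ i, ψ.repr x i * (φ (ψ i) - φ' (ψ i)) = 0 := by
    have hsum : ∑ i, ψ.repr x i * (φ (ψ i) - φ' (ψ i)) = 0 := by rw [← hA1]; exact hA0
    intro i
    exact (Finset.sum_eq_zero_iff_of_nonpos (fun i _ => hterm i)).mp hsum i
      (Finset.mem_univ i)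
  have heq1 : φ (v' - u') = f (v' - u') := by
    rw [hA2] at hA0; linarith
  have hray := strict_ray hf.smul_eq hf.sconv hφle hfw hfw' heul heq1
  -- case analysis
  by_cases hD : ∀ i, φ (ψ i) = 0
  · exfalso
    have hz : φ (v - u) = 0 := by
      rw [apply_eq_sum ψ φ]
      apply Finset.sum_eq_zero
      intro i _; rw [hD i]; ring
    rw [heul] at hz; linarith
  · push_neg at hD
    obtain ⟨i₀, hi₀⟩ := hD
    have hi₀v : i₀ ∈ Jset ψ τ v := by
      by_contra h; exact hi₀ (hstat i₀ h)
    have hi₀J : i₀ ∈ Jset ψ τ us := by rw [← hvJ]; exact hi₀v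
    have hi₀v' : i₀ ∈ Jset ψ τ v' := by rw [hvJ']; exact hi₀J
    have hxi := hxiJ i₀ hi₀J
    have hvv : ψ.repr v i₀ = ψ.repr v' i₀ := by
      rcases hi₀v with h1 | h1 <;> rcases hi₀v' with h2 | h2
      · rw [h1, h2]
      · exfalso
        have hz : ψ.repr x i₀ = τ := by rw [hxi, h1, h2]; ring
        have ha := htop i₀ h1
        have hb := hbot' i₀ h2
        have hmz := htermz i₀
        rw [hz] at hmz
        rcases mul_eq_zero.mp hmz with h | h
        · exact (ne_of_gt hτ) h
        · exact hi₀ (by linarith)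
      · exfalso
        have hz : ψ.repr x i₀ = -τ := by rw [hxi, h1, h2]; ring
        have ha := hbot i₀ h1
        have hb := htop' i₀ h2
        have hmz := htermz i₀
        rw [hz] at hmz
        rcases mul_eq_zero.mp hmz with h | h
        · exact (ne_of_gt hτ) (neg_eq_zero.mp h)
        · exact hi₀ (by linarith)
      · rw [h1, h2]
    -- the scaling factor is 1
    have hwne : ψ.repr (v - u) i₀ ≠ 0 := by
      have h1 : ψ.repr u i₀ = τ * (k i₀ : ℝ) := hslice i₀ hi₀J
      intro h
      have h3 : ψ.repr v i₀ = τ * (k i₀ : ℝ) := by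
        simp only [map_sub, Finsupp.coe_sub, Pi.sub_apply] at h
        rw [h1] at h; linarith
      rcases hi₀v with h2 | h2 <;> rw [h2] at h3
      · have h4 : ((2 * k i₀ - 1 : ℤ) : ℝ) * τ = 0 := by push_cast; linear_combination (-2) * h3
        have h5 : (2 * k i₀ - 1 : ℤ) = 0 := by
          rcases mul_eq_zero.mp h4 with h6 | h6
          · exact_mod_cast h6
          · exact absurd h6 (ne_of_gt hτ)
        omega
      · have h4 : ((2 * k i₀ + 1 : ℤ) : ℝ) * τ = 0 := by push_cast; linear_combination (-2) * h3
        have h5 : (2 * k i₀ + 1 : ℤ) = 0 := by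
          rcases mul_eq_zero.mp h4 with h6 | h6
          · exact_mod_cast h6
          · exact absurd h6 (ne_of_gt hτ)
        omega
    have hreq : ψ.repr (v' - u') i₀ = ψ.repr (v - u) i₀ := by
      simp only [map_sub, Finsupp.coe_sub, Pi.sub_apply]
      rw [hvv, hslice i₀ hi₀J, hslice' i₀ hi₀J]
    have hscal : ψ.repr (v' - u') i₀ =
        (f (v' - u') / f (v - u)) * ψ.repr (v - u) i₀ := by
      conv_lhs => rw [hray]
      rw [_root_.map_smul, Finsupp.smul_apply, smul_eq_mul]
    have hc1 : f (v' - u') / f (v - u) = 1 := by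
      rw [hreq] at hscal
      have h7 : (f (v' - u') / f (v - u)) * ψ.repr (v - u) i₀ =
          1 * ψ.repr (v - u) i₀ := by rw [one_mul]; exact hscal.symm
      exact mul_right_cancel₀ hwne h7
    have hww : v' - u' = v - u := by rw [hray, hc1, one_smul]
    -- conclude coordinatewise
    have hum : ∀ i, ψ.repr u i = τ * (m i : ℝ) := by
      intro i; rw [hm]; exact repr_grid ψ (fun j => τ * (m j : ℝ)) i
    have hum' : ∀ i, ψ.repr u' i = τ * (m' i : ℝ) := by
      intro i; rw [hm']; exact repr_grid ψ (fun j => τ * (m' j : ℝ)) i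
    have hall : ∀ i, ψ.repr u i = ψ.repr u' i := by
      intro i
      by_cases hiJ : i ∈ Jset ψ τ us
      · rw [hslice i hiJ, hslice' i hiJ]
      · have hiv : i ∉ Jset ψ τ v := by rw [hvJ]; exact hiJ
        have hiv' : i ∉ Jset ψ τ v' := by rw [hvJ']; exact hiJ
        have hbv := (mem_cube0_iff' ψ τ v).1 hvC i
        have hbv' := (mem_cube0_iff' ψ τ v').1 hvC' i
        have hlt1 : ψ.repr v i < τ/2 :=
          lt_of_le_of_ne hbv.2 (fun h => hiv (Or.inl h))
        have hlt2 : -(τ/2) < ψ.repr v i :=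
          lt_of_le_of_ne hbv.1 (fun h => hiv (Or.inr h.symm))
        have hlt1' : ψ.repr v' i < τ/2 :=
          lt_of_le_of_ne hbv'.2 (fun h => hiv' (Or.inl h))
        have hlt2' : -(τ/2) < ψ.repr v' i :=
          lt_of_le_of_ne hbv'.1 (fun h => hiv' (Or.inr h.symm))
        have hde : ψ.repr v' i - ψ.repr u' i = ψ.repr v i - ψ.repr u i := by
          have := congrArg (fun z => ψ.repr z i) hww
          simpa only [map_sub, Finsupp.coe_sub, Pi.sub_apply] using this
        have h5 : τ * (m i : ℝ) - τ * (m' i : ℝ) = ψ.repr v i - ψ.repr v' i := by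
          have h6 := hum i
          have h7 := hum' i
          linarith
        have h8 : (m i : ℝ) - (m' i : ℝ) < 1 := by nlinarith
        have h9 : -1 < (m i : ℝ) - (m' i : ℝ) := by nlinarith
        have h10 : m i = m' i := by
          have h11 : ((m i - m' i : ℤ) : ℝ) < 1 := by push_cast; linarith
          have h12 : (-1 : ℝ) < ((m i - m' i : ℤ) : ℝ) := by push_cast; linarith
          have h13 : (m i - m' i : ℤ) < 1 := by exact_mod_cast h11
          have h14 : (-1 : ℤ) < (m i - m' i : ℤ) := by exact_mod_cast h12
          omega
        rw [hum i, hum' i, h10]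
    exact ψ.repr.injective (Finsupp.ext hall)
end
end
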